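/- arXiv:2511.01497 — 5 statements merged into one kernel-verified Lean document; each statement's English description precedes it below -/
import Mathlib

section
/- Let A be a small category and F : Aᵒᵖ ⥤ Type a presheaf. If F is a filtered colimit of representable presheaves, then the left Kan extension of F along the (contravariant) Yoneda embedding Aᵒᵖ ⥤ (A ⥤ Type) preserves finite limits. -/
open CategoryTheory Limits Opposite

namespace Stmt1Aux

variable {A : Type} [SmallCategory A]

/-- The unit exhibiting evaluation at `a` as a left Kan extension of `yoneda.obj a`
along `coyoneda`. -/
def evUnit (a : A) : yoneda.obj a ⟶ coyoneda ⋙ (evaluation A Type).obj a where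
  app _ := TypeCat.ofHom (fun x => x)
  naturality := by intros; rfl

/-- The descent map in the universal property. -/
noncomputable def evDesc (a : A) (H : (A ⥤ Type) ⥤ Type)
    (β : yoneda.obj a ⟶ coyoneda ⋙ H) : (evaluation A Type).obj a ⟶ H where
  app M := TypeCat.ofHom (fun x => H.map (coyonedaEquiv.symm x) (β.app (op a) (𝟙 a)))
  naturality M N f := by
    ext x
    dsimp
    have h : (coyonedaEquiv.symm (f.app a x) : coyoneda.obj (op a) ⟶ N) =
        (coyonedaEquiv.symm x : coyoneda.obj (op a) ⟶ M) ≫ f := by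
      rw [Equiv.symm_apply_eq, coyonedaEquiv_comp, Equiv.apply_symm_apply]
    rw [h, H.map_comp]
    rfl

lemma evDesc_fac (a : A) (H : (A ⥤ Type) ⥤ Type)
    (β : yoneda.obj a ⟶ coyoneda ⋙ H) :
    evUnit a ≫ Functor.whiskerLeft coyoneda (evDesc a H β) = β := by
  ext b x
  have h : (coyonedaEquiv.symm x : coyoneda.obj (op a) ⟶ coyoneda.obj b) =
      coyoneda.map ((x : b.unop ⟶ a)).op := by
    rw [Equiv.symm_apply_eq, coyonedaEquiv_coyoneda_map]
  dsimp [evUnit, evDesc]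
  erw [h]
  have hn := types_congr_hom (β.naturality ((x : b.unop ⟶ a)).op) (𝟙 a)
  dsimp at hn
  rw [← hn]
  simp

lemma ev_hom_eq (a : A) (H : (A ⥤ Type) ⥤ Type)
    (β : yoneda.obj a ⟶ coyoneda ⋙ H)
    (γ : (evaluation A Type).obj a ⟶ H)
    (hγ : evUnit a ≫ Functor.whiskerLeft coyoneda γ = β) : γ = evDesc a H β := by
  ext M x
  have hnat := types_congr_hom (γ.naturality (coyonedaEquiv.symm x : coyoneda.obj (op a) ⟶ M)) (𝟙 a)
  dsimp at hnat
  simp only [FunctorToTypes.map_id_apply] at hnat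
  have h2 : γ.app (coyoneda.obj (op a)) (𝟙 a) = β.app (op a) (𝟙 a) := by
    have := types_congr_hom (congr_app hγ (op a)) (𝟙 a)
    simpa [evUnit] using this
  dsimp [evDesc]
  rw [← h2]
  exact hnat

/-- Evaluation at `a` is a left Kan extension of `yoneda.obj a` along `coyoneda`. -/
instance ev_isLKE (a : A) :
    ((evaluation A Type).obj a).IsLeftKanExtension (evUnit a) where
  nonempty_isUniversal := ⟨IsInitial.ofUniqueHom
    (fun Y => StructuredArrow.homMk (evDesc a Y.right Y.hom) (evDesc_fac a Y.right Y.hom))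
    (fun Y m => by
      ext : 1
      exact ev_hom_eq a Y.right Y.hom m.right (StructuredArrow.w m))⟩

end Stmt1Aux

/-- If a presheaf `F` on a small category `A` is a filtered colimit of
representable presheaves, then the left Kan extension of `F` along the contravariant
Yoneda embedding `coyoneda : Aᵒᵖ ⥤ (A ⥤ Type)` preserves finite limits. -/
theorem stmt1 {A : Type} [SmallCategory A] (F : Aᵒᵖ ⥤ Type)
    (I : Type) [SmallCategory I] [IsFiltered I] (D : I ⥤ A)
    (hF : Nonempty (F ≅ colimit (D ⋙ yoneda)))
    (G : (A ⥤ Type) ⥤ Type) (α : F ⟶ coyoneda ⋙ G) [G.IsLeftKanExtension α] :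
    Nonempty (PreservesFiniteLimits G) := by
  obtain ⟨e⟩ := hF
  constructor
  set L : (Aᵒᵖ ⥤ Type) ⥤ ((A ⥤ Type) ⥤ Type) := coyoneda.lan with hL
  have hadj := Functor.lanAdjunction (coyoneda : Aᵒᵖ ⥤ (A ⥤ Type)) Type
  have : PreservesColimitsOfSize.{0, 0} L := hadj.leftAdjoint_preservesColimits
  -- `G` is isomorphic to the chosen left Kan extension of `colimit (D ⋙ yoneda)`
  have i1 : G ≅ L.obj (colimit (D ⋙ yoneda)) :=
    Functor.leftKanExtensionUniqueOfIso G α e (L.obj (colimit (D ⋙ yoneda)))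
      (coyoneda.lanUnit.app (colimit (D ⋙ yoneda)))
  have i2 : L.obj (colimit (D ⋙ yoneda)) ≅ colimit ((D ⋙ yoneda) ⋙ L) :=
    preservesColimitIso L (D ⋙ yoneda)
  have i3 : colimit ((D ⋙ yoneda) ⋙ L) ≅ ((D ⋙ yoneda) ⋙ L).flip ⋙ colim :=
    colimitIsoFlipCompColim _
  -- each `L.obj (yoneda.obj (D.obj i))` preserves finite limits
  have hpres : ∀ i : I, PreservesFiniteLimits (((D ⋙ yoneda) ⋙ L).obj i) := by
    intro i
    have iso : (evaluation A Type).obj (D.obj i) ≅ L.obj (yoneda.obj (D.obj i)) :=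
      Functor.leftKanExtensionUnique ((evaluation A Type).obj (D.obj i)) (Stmt1Aux.evUnit (D.obj i))
        (L.obj (yoneda.obj (D.obj i))) (coyoneda.lanUnit.app (yoneda.obj (D.obj i)))
    have : PreservesFiniteLimits ((evaluation A Type).obj (D.obj i)) :=
      ⟨fun J _ _ => inferInstance⟩
    exact preservesFiniteLimits_of_natIso iso
  have hflip : PreservesFiniteLimits ((D ⋙ yoneda) ⋙ L).flip := by
    constructor
    intro J _ _
    apply preservesLimitsOfShape_of_evaluation
    intro i
    have := hpres i
    exact preservesLimitsOfShape_of_natIso ((flipCompEvaluation ((D ⋙ yoneda) ⋙ L) i).symm)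
  have hcolim : PreservesFiniteLimits (colim : (I ⥤ Type) ⥤ Type) := inferInstance
  have : PreservesFiniteLimits (((D ⋙ yoneda) ⋙ L).flip ⋙ colim) :=
    comp_preservesFiniteLimits _ _
  exact preservesFiniteLimits_of_natIso (i1 ≪≫ i2 ≪≫ i3).symm
end

section
/- Let A be a small category and F : Aᵒᵖ ⥤ Type a presheaf. If the left Kan extension of F along the contravariant Yoneda embedding preserves finite limits, then the category of elements of F is filtered. -/
open CategoryTheory Limits

/-- If the left Kan extension of a presheaf `F : Aᵒᵖ ⥤ Type` along the
contravariant Yoneda embedding preserves finite limits, then the category of elements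
of `F` (the category of representables over `F`) is filtered. -/
theorem stmt2 {A : Type} [SmallCategory A] (F : Aᵒᵖ ⥤ Type)
    (G : (A ⥤ Type) ⥤ Type) (α : F ⟶ coyoneda ⋙ G) [G.IsLeftKanExtension α]
    (hG : PreservesFiniteLimits G) :
    IsFiltered (CostructuredArrow yoneda F) := by
  have hpt := Functor.isPointwiseLeftKanExtensionOfIsLeftKanExtension G α
  suffices h : IsCofiltered F.Elements from
    IsFiltered.of_equivalence (CategoryOfElements.costructuredArrowYonedaEquivalence F)
  apply IsCofiltered.of_cone_nonempty.{0}
  intro J _ _ H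
  haveI := hG.preservesFiniteLimits J
  set D : J ⥤ (A ⥤ Type) := H ⋙ CategoryOfElements.π F ⋙ coyoneda with hD
  have hlim : IsLimit (G.mapCone (limit.cone D)) := isLimitOfPreserves G (limit.isLimit D)
  -- the compatible family of elements
  have hs : (fun j => α.app (H.obj j).1 (H.obj j).2) ∈ (D ⋙ G).sections := by
    intro j j' f
    have h1 := ConcreteCategory.congr_hom (α.naturality ((H.map f).val)) (H.obj j).2
    have h2 := (H.map f).2
    simp only [Functor.comp_map, types_comp_apply] at h1
    dsimp [D]
    exact h1.symm.trans (congrArg (fun z => α.app (H.obj j').1 z) h2)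
  let p : G.obj (limit D) := (Types.isLimitEquivSections hlim).symm ⟨_, hs⟩
  have hp : ∀ j, G.map (limit.π D j) p = α.app (H.obj j).1 (H.obj j).2 := fun j =>
    Types.isLimitEquivSections_symm_apply hlim ⟨_, hs⟩ j
  -- p comes from some element of the colimit description
  obtain ⟨g, y, hgy⟩ := Types.jointly_surjective _ (hpt (limit D)) p
  have hgy' : G.map g.hom (α.app g.left y) = p := hgy
  -- morphisms to the diagram
  have hiso : ∀ c : Aᵒᵖ, IsIso (α.app c) := fun c =>
    (hpt (coyoneda.obj c)).isIso_hom_app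
  let f : ∀ j, g.left ⟶ (H.obj j).1 := fun j => coyoneda.preimage (g.hom ≫ limit.π D j)
  have hf : ∀ j, coyoneda.map (f j) = g.hom ≫ limit.π D j := fun j =>
    coyoneda.map_preimage _
  have hmap : ∀ j, F.map (f j) y = (H.obj j).2 := by
    intro j
    haveI := hiso (H.obj j).1
    apply (asIso (α.app (H.obj j).1)).toEquiv.injective
    have h1 := ConcreteCategory.congr_hom (α.naturality (f j)) y
    simp only [Functor.comp_map, types_comp_apply] at h1
    show α.app _ (F.map (f j) y) = α.app _ (H.obj j).2
    have h1' : α.app _ (F.map (f j) y) = G.map (coyoneda.map (f j)) (α.app g.left y) := h1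
    exact h1'.trans ((congrArg (fun m => G.map m (α.app g.left y)) (hf j)).trans
      ((FunctorToTypes.map_comp_apply G _ _ _).trans ((congrArg (G.map (limit.π D j)) hgy').trans (hp j))))
  refine ⟨⟨⟨g.left, y⟩, ⟨fun j => ⟨f j, hmap j⟩, ?_⟩⟩⟩
  intro j j' φ
  ext1
  show (𝟙 g.left ≫ f j' : g.left ⟶ _) = f j ≫ (H.map φ).val
  rw [Category.id_comp]
  apply coyoneda.map_injective
  have hc : coyoneda.map ((H.map φ).val) = D.map φ := rfl
  rw [Functor.map_comp, hf, hf, hc]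
  exact ((Category.assoc _ _ _).trans (congrArg (g.hom ≫ ·) (limit.w D φ))).symm
end

section
/- Let A be a small category with pullbacks carrying a Grothendieck topology, and let {u_i → x} be a family of morphisms generating a covering sieve of x, with S the sieve generated. Let U_• : Δᵒᵖ ⥤ (Aᵒᵖ ⥤ Type) be the Čech nerve of the map ∐ yoneda(u_i) → yoneda(x). Then a presheaf F : Aᵒᵖ ⥤ Type satisfies the sheaf condition with respect to S if and only if the canonical map F(x) → lim_{Δ} Hom(U_•, F) is a bijection. -/
open CategoryTheory Limits

noncomputable section

variable {A : Type} [SmallCategory A] {x : A} {ι : Type} (u : ι → A) (f : ∀ i, u i ⟶ x)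

/-- The canonical map `∐ yoneda (u i) ⟶ yoneda x` induced by a family of morphisms
`f i : u i ⟶ x`, as an arrow in the presheaf category. -/
def familyArrow : Arrow (Aᵒᵖ ⥤ Type) :=
  Arrow.mk (Sigma.desc fun i => yoneda.map (f i))

/-- The Čech nerve `U_•` of the map `∐ yoneda (u i) ⟶ yoneda x`. -/
def cechU : SimplicialObject (Aᵒᵖ ⥤ Type) := (familyArrow u f).cechNerve

-- the map q
def qmap : (familyArrow u f).left ⟶ (Sieve.generate (Presieve.ofArrows u f)).functor :=
  Sigma.desc fun i => yonedaEquiv.symm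
    ⟨f i, u i, 𝟙 _, f i, Presieve.ofArrows.mk i, Category.id_comp _⟩

lemma qmap_incl :
    qmap u f ≫ (Sieve.generate (Presieve.ofArrows u f)).functorInclusion
      = (familyArrow u f).hom := by
  apply Sigma.hom_ext
  intro i
  erw [← Category.assoc]
  simp only [qmap, colimit.ι_desc]
  dsimp [familyArrow]
  rw [colimit.ι_desc]
  apply yonedaEquiv.injective
  rw [yonedaEquiv_comp]
  erw [Equiv.apply_symm_apply]
  show f i = yonedaEquiv (yoneda.map (f i))
  rw [yonedaEquiv_yoneda_map]

lemma pi_qmap (n : SimplexCategory) (i : Fin (n.len + 1)) :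
    (WidePullback.π (fun _ : Fin (n.len + 1) => (familyArrow u f).hom) i) ≫ qmap u f
      = WidePullback.π _ 0 ≫ qmap u f := by
  rw [← cancel_mono (Sieve.generate (Presieve.ofArrows u f)).functorInclusion]
  simp [qmap_incl, WidePullback.π_arrow]
  erw [WidePullback.π_arrow, WidePullback.π_arrow]

lemma cechD_map (F : Aᵒᵖ ⥤ Type) {n n' : SimplexCategory} (θ : n ⟶ n')
    (g : (cechU u f).obj (Opposite.op n) ⟶ F) :
    ((cechU u f).rightOp ⋙ yoneda.obj F).map θ g = (cechU u f).map θ.op ≫ g := rfl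

lemma cechU_map_π {n n' : SimplexCategory} (θ : n ⟶ n') (i : Fin (n.len + 1)) :
    (cechU u f).map θ.op ≫ WidePullback.π _ i = WidePullback.π _ (θ.toOrderHom i) := by
  dsimp [cechU, Arrow.cechNerve]
  rw [WidePullback.lift_π]

lemma cechU_map_base {n n' : SimplexCategory} (θ : n ⟶ n') :
    (cechU u f).map θ.op ≫ WidePullback.base _ = WidePullback.base _ := by
  dsimp [cechU, Arrow.cechNerve]
  rw [WidePullback.lift_base]

lemma descent {F : Aᵒᵖ ⥤ Type} (s : limit ((cechU u f).rightOp ⋙ yoneda.obj F))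
    {Z : Aᵒᵖ ⥤ Type} (m m' : Z ⟶ (cechU u f).obj (Opposite.op (SimplexCategory.mk 0)))
    (hmm : m ≫ WidePullback.base _ = m' ≫ WidePullback.base _) :
    m ≫ limit.π ((cechU u f).rightOp ⋙ yoneda.obj F) (SimplexCategory.mk 0) s
      = m' ≫ limit.π ((cechU u f).rightOp ⋙ yoneda.obj F) (SimplexCategory.mk 0) s := by
  let w : Z ⟶ (cechU u f).obj (Opposite.op (SimplexCategory.mk 1)) :=
    WidePullback.lift (m ≫ WidePullback.base _)
      (fun j => if j = 0 then m ≫ WidePullback.π _ 0 else m' ≫ WidePullback.π _ 0)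
      (by
        intro j
        dsimp only
        split
        · erw [Category.assoc, WidePullback.π_arrow]
        · erw [Category.assoc, WidePullback.π_arrow, hmm])
  let θ0 : SimplexCategory.mk 0 ⟶ SimplexCategory.mk 1 := SimplexCategory.const _ _ 0
  let θ1 : SimplexCategory.mk 0 ⟶ SimplexCategory.mk 1 := SimplexCategory.const _ _ 1
  have h0 : w ≫ (cechU u f).map θ0.op = m := by
    apply WidePullback.hom_ext
    · intro j
      erw [Category.assoc, cechU_map_π]
      show w ≫ WidePullback.π _ (0 : Fin 2) = _
      erw [WidePullback.lift_π]
      rw [if_pos rfl]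
      have hj : j = 0 := Subsingleton.elim (α := Fin 1) j 0
      rw [hj]
      rfl
    · erw [Category.assoc, cechU_map_base, WidePullback.lift_base]
      rfl
  have h1 : w ≫ (cechU u f).map θ1.op = m' := by
    apply WidePullback.hom_ext
    · intro j
      erw [Category.assoc, cechU_map_π]
      show w ≫ WidePullback.π _ (1 : Fin 2) = _
      erw [WidePullback.lift_π]
      rw [if_neg (by decide)]
      have hj : j = 0 := Subsingleton.elim (α := Fin 1) j 0
      rw [hj]
      rfl
    · erw [Category.assoc, cechU_map_base, WidePullback.lift_base, hmm]
      rfl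
  have c0 := types_congr_hom (limit.w ((cechU u f).rightOp ⋙ yoneda.obj F) θ0) s
  have c1 := types_congr_hom (limit.w ((cechU u f).rightOp ⋙ yoneda.obj F) θ1) s
  simp only [types_comp_apply] at c0 c1
  rw [← h0, ← h1, Category.assoc, Category.assoc]
  congr 1
  show ((cechU u f).rightOp ⋙ yoneda.obj F).map θ0
      (limit.π ((cechU u f).rightOp ⋙ yoneda.obj F) (SimplexCategory.mk 0) s)
    = ((cechU u f).rightOp ⋙ yoneda.obj F).map θ1
      (limit.π ((cechU u f).rightOp ⋙ yoneda.obj F) (SimplexCategory.mk 0) s)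
  rw [c0, c1]

lemma mem_generate_iff {a : A} (g : a ⟶ x) :
    Sieve.generate (Presieve.ofArrows u f) g ↔ ∃ (i : ι) (h : a ⟶ u i), h ≫ f i = g := by
  constructor
  · rintro ⟨Y, h, l, ⟨i⟩, fac⟩
    exact ⟨i, h, fac⟩
  · rintro ⟨i, h, fac⟩
    exact ⟨u i, h, f i, Presieve.ofArrows.mk i, fac⟩

def liftOf {a : Aᵒᵖ} (ξ : ((Sieve.generate (Presieve.ofArrows u f)).functor).obj a) :
    yoneda.obj a.unop ⟶ (cechU u f).obj (Opposite.op (SimplexCategory.mk 0)) :=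
  WidePullback.lift (yoneda.map ξ.1)
    (fun _ => yoneda.map ((mem_generate_iff u f ξ.1).mp ξ.2).choose_spec.choose ≫
       Sigma.ι (fun i => yoneda.obj (u i)) ((mem_generate_iff u f ξ.1).mp ξ.2).choose)
    (by
      intro j
      erw [Category.assoc]
      show _ ≫ Sigma.ι _ _ ≫ Sigma.desc (fun i => yoneda.map (f i)) = _
      rw [colimit.ι_desc]
      dsimp
      rw [← yoneda.map_comp, ((mem_generate_iff u f ξ.1).mp ξ.2).choose_spec.choose_spec])

lemma liftOf_base {a : Aᵒᵖ} (ξ : ((Sieve.generate (Presieve.ofArrows u f)).functor).obj a) :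
    liftOf u f ξ ≫ WidePullback.base (fun _ : Fin ((SimplexCategory.mk 0).len + 1) =>
      (familyArrow u f).hom) = yoneda.map ξ.1 :=
  WidePullback.lift_base _ _ _ _

def hNat (F : Aᵒᵖ ⥤ Type) (s : limit ((cechU u f).rightOp ⋙ yoneda.obj F)) :
    (Sieve.generate (Presieve.ofArrows u f)).functor ⟶ F where
  app a := TypeCat.ofHom fun ξ => yonedaEquiv (liftOf u f ξ ≫
    limit.π ((cechU u f).rightOp ⋙ yoneda.obj F) (SimplexCategory.mk 0) s)
  naturality a b φ := by
    ext ξ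
    have hd := descent u f s
      (liftOf u f (((Sieve.generate (Presieve.ofArrows u f)).functor).map φ ξ))
      (yoneda.map φ.unop ≫ liftOf u f ξ)
      (by
        show liftOf u f ((Sieve.generate (Presieve.ofArrows u f)).functor.map φ ξ)
            ≫ WidePullback.base (fun _ : Fin ((SimplexCategory.mk 0).len + 1) =>
              (familyArrow u f).hom)
          = (yoneda.map φ.unop ≫ liftOf u f ξ)
            ≫ WidePullback.base (fun _ : Fin ((SimplexCategory.mk 0).len + 1) =>
              (familyArrow u f).hom)
        erw [liftOf_base, Category.assoc, liftOf_base, ← yoneda.map_comp]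
        rfl)
    show yonedaEquiv _ = F.map φ (yonedaEquiv _)
    erw [hd, Category.assoc]
    have := yonedaEquiv_naturality
      (liftOf u f ξ ≫ limit.π ((cechU u f).rightOp ⋙ yoneda.obj F) (SimplexCategory.mk 0) s)
      φ.unop
    exact this.symm

lemma hNat_eq (F : Aᵒᵖ ⥤ Type) (s : limit ((cechU u f).rightOp ⋙ yoneda.obj F))
    {a : Aᵒᵖ} (ξ : ((Sieve.generate (Presieve.ofArrows u f)).functor).obj a)
    (m : yoneda.obj a.unop ⟶ (cechU u f).obj (Opposite.op (SimplexCategory.mk 0)))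
    (hm : m ≫ WidePullback.base _ = yoneda.map ξ.1) :
    (hNat u f F s).app a ξ
      = yonedaEquiv (m ≫ limit.π ((cechU u f).rightOp ⋙ yoneda.obj F) (SimplexCategory.mk 0) s) := by
  have hd := descent u f s (liftOf u f ξ) m
    (by
      show liftOf u f ξ ≫ WidePullback.base (fun _ : Fin ((SimplexCategory.mk 0).len + 1) =>
          (familyArrow u f).hom)
        = m ≫ WidePullback.base (fun _ : Fin ((SimplexCategory.mk 0).len + 1) =>
          (familyArrow u f).hom)
      rw [liftOf_base]
      exact hm.symm)
  show yonedaEquiv _ = _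
  rw [hd]

def sieveCone (F : Aᵒᵖ ⥤ Type) : Cone ((cechU u f).rightOp ⋙ yoneda.obj F) where
  pt := ((Sieve.generate (Presieve.ofArrows u f)).functor ⟶ F)
  π :=
    { app := fun n => TypeCat.ofHom fun h =>
        WidePullback.π (fun _ : Fin (n.len + 1) => (familyArrow u f).hom) 0 ≫ qmap u f ≫ h
      naturality := by
        intro n n' θ
        ext h
        show WidePullback.π (fun _ : Fin (n'.len + 1) => (familyArrow u f).hom) 0 ≫ qmap u f ≫ h
          = (cechU u f).map θ.op ≫
            WidePullback.π (fun _ : Fin (n.len + 1) => (familyArrow u f).hom) 0 ≫ qmap u f ≫ h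
        erw [← Category.assoc ((cechU u f).map θ.op), cechU_map_π]
        simp only [← Category.assoc]
        erw [← Category.assoc]
        refine congrArg (· ≫ h) ?_
        exact (pi_qmap u f n' ((SimplexCategory.Hom.toOrderHom θ) 0)).symm }

lemma e_incl :
    WidePullback.π (fun _ : Fin ((SimplexCategory.mk 0).len + 1) => (familyArrow u f).hom) 0
      ≫ qmap u f ≫ (Sieve.generate (Presieve.ofArrows u f)).functorInclusion
      = WidePullback.base (fun _ : Fin ((SimplexCategory.mk 0).len + 1) =>
          (familyArrow u f).hom) := by
  rw [qmap_incl]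
  apply WidePullback.π_arrow

lemma e_hNat (F : Aᵒᵖ ⥤ Type) (s : limit ((cechU u f).rightOp ⋙ yoneda.obj F)) :
    WidePullback.π (fun _ : Fin ((SimplexCategory.mk 0).len + 1) => (familyArrow u f).hom) 0
        ≫ qmap u f ≫ hNat u f F s
      = limit.π ((cechU u f).rightOp ⋙ yoneda.obj F) (SimplexCategory.mk 0) s := by
  apply NatTrans.ext
  funext a
  ext ζ
  show (hNat u f F s).app a
    ((WidePullback.π (fun _ : Fin ((SimplexCategory.mk 0).len + 1) => (familyArrow u f).hom) 0
      ≫ qmap u f).app a ζ) = _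
  have hval : (((WidePullback.π (fun _ : Fin ((SimplexCategory.mk 0).len + 1) =>
        (familyArrow u f).hom) 0 ≫ qmap u f).app a ζ) : _).1
      = (WidePullback.base (fun _ : Fin ((SimplexCategory.mk 0).len + 1) =>
        (familyArrow u f).hom)).app a ζ := by
    have := congrArg (fun (t : _ ⟶ yoneda.obj x) => t.app a ζ) (e_incl u f)
    exact this
  rw [hNat_eq u f F s _ (yonedaEquiv.symm ζ)
    (by
      apply yonedaEquiv.injective
      refine Eq.trans ?_ (yonedaEquiv_yoneda_map _).symm
      erw [yonedaEquiv_comp, Equiv.apply_symm_apply]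
      exact hval.symm)]
  erw [yonedaEquiv_comp, Equiv.apply_symm_apply]
  rfl

lemma e_surj (F : Aᵒᵖ ⥤ Type) (a : Aᵒᵖ)
    (ξ : ((Sieve.generate (Presieve.ofArrows u f)).functor).obj a) :
    ∃ ζ, ((WidePullback.π (fun _ : Fin ((SimplexCategory.mk 0).len + 1) =>
        (familyArrow u f).hom) 0 ≫ qmap u f)).app a ζ = ξ := by
  refine ⟨yonedaEquiv (liftOf u f ξ), ?_⟩
  have h1 : ((WidePullback.π (fun _ : Fin ((SimplexCategory.mk 0).len + 1) =>
        (familyArrow u f).hom) 0 ≫ qmap u f)).app a (yonedaEquiv (liftOf u f ξ))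
      = yonedaEquiv (liftOf u f ξ ≫
          WidePullback.π (fun _ : Fin ((SimplexCategory.mk 0).len + 1) =>
            (familyArrow u f).hom) 0 ≫ qmap u f) :=
    (yonedaEquiv_comp (liftOf u f ξ) _).symm
  rw [h1]
  apply Subtype.ext
  have h2 := yonedaEquiv_comp
    (liftOf u f ξ ≫ WidePullback.π (fun _ : Fin ((SimplexCategory.mk 0).len + 1) =>
      (familyArrow u f).hom) 0 ≫ qmap u f)
    (Sieve.generate (Presieve.ofArrows u f)).functorInclusion
  have h3 : (liftOf u f ξ ≫ WidePullback.π (fun _ : Fin ((SimplexCategory.mk 0).len + 1) =>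
      (familyArrow u f).hom) 0 ≫ qmap u f) ≫
      (Sieve.generate (Presieve.ofArrows u f)).functorInclusion = yoneda.map ξ.1 := by
    simp only [Category.assoc]
    erw [Category.assoc, e_incl, liftOf_base]
  rw [h3, yonedaEquiv_yoneda_map ξ.1] at h2
  exact h2.symm

/-- The cone over the cosimplicial type `[n] ↦ Hom(U_n, F)` whose point is `F(x)`,
with legs given by the Čech augmentation `U_n ⟶ yoneda x` followed by the element
`y : F(x)` viewed as a map `yoneda x ⟶ F` via the Yoneda lemma. -/
def cechCone (F : Aᵒᵖ ⥤ Type) :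
    Cone ((cechU u f).rightOp ⋙ yoneda.obj F) where
  pt := F.obj (Opposite.op x)
  π :=
    { app := fun n => TypeCat.ofHom fun y =>
        (familyArrow u f).augmentedCechNerve.hom.app (Opposite.op n) ≫ yonedaEquiv.symm y
      naturality := fun n n' θ => by
        ext y
        dsimp [cechU]
        erw [← Category.assoc]
        congr 1
        exact (WidePullback.lift_base _ _ _ _).symm }

lemma e_incl' (n : SimplexCategory) :
    WidePullback.π (fun _ : Fin (n.len + 1) => (familyArrow u f).hom) 0
      ≫ qmap u f ≫ (Sieve.generate (Presieve.ofArrows u f)).functorInclusion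
      = WidePullback.base (fun _ : Fin (n.len + 1) => (familyArrow u f).hom) := by
  rw [qmap_incl]
  apply WidePullback.π_arrow

lemma lift_eq (F : Aᵒᵖ ⥤ Type) :
    ⇑(limit.lift ((cechU u f).rightOp ⋙ yoneda.obj F) (cechCone u f F))
      = fun y => (limit.lift ((cechU u f).rightOp ⋙ yoneda.obj F) (sieveCone u f F))
          ((Sieve.generate (Presieve.ofArrows u f)).functorInclusion ≫ yonedaEquiv.symm y) := by
  funext y
  apply Types.limit_ext'
  intro n
  erw [Types.Limit.lift_π_apply', Types.Limit.lift_π_apply']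
  show WidePullback.base (fun _ : Fin (n.len + 1) => (familyArrow u f).hom) ≫ yonedaEquiv.symm y
    = WidePullback.π (fun _ : Fin (n.len + 1) => (familyArrow u f).hom) 0 ≫ qmap u f ≫
      ((Sieve.generate (Presieve.ofArrows u f)).functorInclusion ≫ yonedaEquiv.symm y)
  rw [← e_incl' u f n]
  erw [Category.assoc, Category.assoc]

lemma sieveLift_bijective (F : Aᵒᵖ ⥤ Type) :
    Function.Bijective (limit.lift ((cechU u f).rightOp ⋙ yoneda.obj F) (sieveCone u f F)) := by
  constructor
  · intro h h' hhh
    have h0 : (sieveCone u f F).π.app (SimplexCategory.mk 0) h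
        = (sieveCone u f F).π.app (SimplexCategory.mk 0) h' := by
      have := congrArg (limit.π ((cechU u f).rightOp ⋙ yoneda.obj F) (SimplexCategory.mk 0)) hhh
      rwa [Types.Limit.lift_π_apply', Types.Limit.lift_π_apply'] at this
    apply NatTrans.ext
    funext a
    ext ξ
    obtain ⟨ζ, hζ⟩ := e_surj u f F a ξ
    have := congrArg (fun (t : _ ⟶ F) => t.app a ζ) h0
    simp only [NatTrans.comp_app, types_comp_apply] at this hζ
    rw [← hζ]
    exact this
  · intro s
    refine ⟨hNat u f F s, ?_⟩
    apply Types.limit_ext'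
    intro n
    erw [Types.Limit.lift_π_apply']
    have c := types_congr_hom (limit.w ((cechU u f).rightOp ⋙ yoneda.obj F)
      (SimplexCategory.const (SimplexCategory.mk 0) n 0)) s
    simp only [types_comp_apply] at c
    rw [← c, ← e_hNat u f F s]
    show WidePullback.π (fun _ : Fin (n.len + 1) => (familyArrow u f).hom) 0
        ≫ qmap u f ≫ hNat u f F s
      = (cechU u f).map (SimplexCategory.const (SimplexCategory.mk 0) n 0).op ≫
        WidePullback.π (fun _ : Fin ((SimplexCategory.mk 0).len + 1) => (familyArrow u f).hom) 0
          ≫ qmap u f ≫ hNat u f F s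
    erw [← Category.assoc ((cechU u f).map _), cechU_map_π]
    simp only [← Category.assoc]
    rfl

/-- Let `A` be a small category with pullbacks equipped with a
Grothendieck topology `J`, and let `{f i : u i ⟶ x}` generate a covering sieve `S`.
Let `U_•` be the Čech nerve of `∐ yoneda (u i) ⟶ yoneda x`. Then a presheaf `F`
satisfies the sheaf condition with respect to `S` (the restriction map
`Hom(yoneda x, F) → Hom(S, F)` is bijective) if and only if the canonical map
`F(x) ⟶ lim_Δ Hom(U_•, F)` is a bijection. -/
theorem stmt13 [HasPullbacks A] (J : GrothendieckTopology A)
    (hS : Sieve.generate (Presieve.ofArrows u f) ∈ J x) (F : Aᵒᵖ ⥤ Type) :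
    Function.Bijective (fun g : yoneda.obj x ⟶ F =>
        (Sieve.generate (Presieve.ofArrows u f)).functorInclusion ≫ g) ↔
      Function.Bijective
        (limit.lift ((cechU u f).rightOp ⋙ yoneda.obj F) (cechCone u f F)) := by
  rw [lift_eq u f F]
  have heq : (fun y => limit.lift ((cechU u f).rightOp ⋙ yoneda.obj F) (sieveCone u f F)
        ((Sieve.generate (Presieve.ofArrows u f)).functorInclusion ≫ yonedaEquiv.symm y))
      = (limit.lift ((cechU u f).rightOp ⋙ yoneda.obj F) (sieveCone u f F))
        ∘ (fun g : yoneda.obj x ⟶ F =>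
            (Sieve.generate (Presieve.ofArrows u f)).functorInclusion ≫ g)
        ∘ yonedaEquiv.symm := rfl
  rw [heq]
  exact ((Function.Bijective.of_comp_iff' (sieveLift_bijective u f F) _).trans
    (Function.Bijective.of_comp_iff _ yonedaEquiv.symm.bijective)).symm


end
end

section
/- Let A and B be small categories, and let 𝔸 and 𝔹 be sets of cones in A and B respectively. Define the product sketch on A × B whose cones are the cones of 𝔸 paired with each object of B (constant in the B coordinate) together with the cones of 𝔹 paired with each object of A. Then the category of models of the product sketch in Type is equivalent to the category of models of (A, 𝔸) valued in the category of models of (B, 𝔹). -/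
open CategoryTheory Limits

/-- A cone in a small category `A`: a small index category, a diagram and a cone. -/
structure SketchCone (A : Type) [SmallCategory A] where
  K : Type
  [instK : SmallCategory K]
  D : K ⥤ A
  c : Cone D

attribute [instance] SketchCone.instK

variable {A B : Type} [SmallCategory A] [SmallCategory B]

/-- The functor `a ↦ (a, b)`, constant in the second coordinate. -/
def withB (b : B) : A ⥤ A × B := (Functor.id A).prod' ((Functor.const A).obj b)

/-- The functor `b ↦ (a, b)`, constant in the first coordinate. -/
def withA (a : A) : B ⥤ A × B := ((Functor.const B).obj a).prod' (Functor.id B)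

/-- A model in `Type` of the product sketch on `A × B`: the cones of `𝔸` paired with
each object of `B`, together with the cones of `𝔹` paired with each object of `A`,
all go to limit cones. -/
def IsProdModel (SA : Set (SketchCone A)) (SB : Set (SketchCone B))
    (F : A × B ⥤ Type) : Prop :=
  (∀ σ ∈ SA, ∀ b : B,
      Nonempty (IsLimit (F.mapCone ((withB (A := A) b).mapCone σ.c)))) ∧
  (∀ τ ∈ SB, ∀ a : A,
      Nonempty (IsLimit (F.mapCone ((withA (B := B) a).mapCone τ.c))))

/-- The category of models of the sketch `(B, 𝔹)` in `Type`. -/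
def ModCat (SB : Set (SketchCone B)) : Type 1 :=
  ObjectProperty.FullSubcategory (fun G : B ⥤ Type => ∀ τ ∈ SB, Nonempty (IsLimit (G.mapCone τ.c)))

instance (SB : Set (SketchCone B)) : Category (ModCat SB) :=
  ObjectProperty.FullSubcategory.category _

open Functor

/-- Models of `(B, SB)` are closed under limits in `B ⥤ Type`. -/
lemma closedUnder (SB : Set (SketchCone B)) (J : Type) [SmallCategory J] :
    ∀ {D : J ⥤ B ⥤ Type} {c : Cone D} (_hc : IsLimit c),
      (∀ j, (fun G : B ⥤ Type => ∀ τ ∈ SB, Nonempty (IsLimit (G.mapCone τ.c))) (D.obj j)) →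
      (fun G : B ⥤ Type => ∀ τ ∈ SB, Nonempty (IsLimit (G.mapCone τ.c))) c.pt := by
  intro D c hc h τ hτ
  have hinj : ∀ (b : B) (z z' : c.pt.obj b),
      (∀ j, (c.π.app j).app b z = (c.π.app j).app b z') → z = z' := by
    intro b z z' hzz
    have hsec : (fun j => (c.π.app j).app b z) ∈
        (D ⋙ (evaluation B Type).obj b).sections := by
      intro j j' f
      exact ConcreteCategory.congr_hom (congr_arg (fun α => NatTrans.app α b) (c.w f)) z
    obtain ⟨w, hw1, hw2⟩ := (Types.isLimit_iff
      ((((evaluation B Type).obj b)).mapCone c)).mp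
      ⟨isLimitOfPreserves ((evaluation B Type).obj b) hc⟩ _ hsec
    rw [hw2 z fun j => rfl, hw2 z' fun j => (hzz j).symm]
  rw [Types.isLimit_iff]
  intro s hs
  have hsj : ∀ j : J, (fun k => (c.π.app j).app (τ.D.obj k) (s k)) ∈
      (τ.D ⋙ D.obj j).sections := by
    intro j k k' f
    dsimp
    rw [← hs f]
    exact (ConcreteCategory.congr_hom ((c.π.app j).naturality (τ.D.map f)) (s k)).symm
  have hy : ∀ j : J, ∃! y : (D.obj j).obj τ.c.pt,
      ∀ k, (D.obj j).map (τ.c.π.app k) y = (c.π.app j).app (τ.D.obj k) (s k) :=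
    fun j => (Types.isLimit_iff ((D.obj j).mapCone τ.c)).mp (h j τ hτ) _ (hsj j)
  choose y hy1 hy2 using hy
  have hysec : (fun j => y j) ∈ (D ⋙ (evaluation B Type).obj τ.c.pt).sections := by
    intro j j' f
    dsimp
    refine hy2 j' _ fun k => ?_
    have n1 : (D.obj j').map (τ.c.π.app k) ((D.map f).app τ.c.pt (y j)) =
        (D.map f).app (τ.D.obj k) ((D.obj j).map (τ.c.π.app k) (y j)) :=
      (ConcreteCategory.congr_hom ((D.map f).naturality (τ.c.π.app k)) (y j)).symm
    rw [n1, hy1 j k]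
    exact ConcreteCategory.congr_hom (congr_arg (fun α => NatTrans.app α (τ.D.obj k)) (c.w f)) (s k)
  obtain ⟨x, hx1, hx2⟩ := (Types.isLimit_iff
    ((((evaluation B Type).obj τ.c.pt)).mapCone c)).mp
    ⟨isLimitOfPreserves ((evaluation B Type).obj τ.c.pt) hc⟩ _ hysec
  refine ⟨x, fun k => ?_, fun x' hx' => ?_⟩
  · refine hinj (τ.D.obj k) _ _ fun j => ?_
    have n1 : (c.π.app j).app (τ.D.obj k) (c.pt.map (τ.c.π.app k) x) =
        (D.obj j).map (τ.c.π.app k) ((c.π.app j).app τ.c.pt x) :=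
      ConcreteCategory.congr_hom ((c.π.app j).naturality (τ.c.π.app k)) x
    exact n1.trans (by rw [show (c.π.app j).app τ.c.pt x = y j from hx1 j]; exact hy1 j k)
  · refine hx2 x' fun j => ?_
    refine hy2 j _ fun k => ?_
    have n1 : (D.obj j).map (τ.c.π.app k) ((c.π.app j).app τ.c.pt x') =
        (c.π.app j).app (τ.D.obj k) (c.pt.map (τ.c.π.app k) x') :=
      (ConcreteCategory.congr_hom ((c.π.app j).naturality (τ.c.π.app k)) x').symm
    exact n1.trans (congr_arg ((c.π.app j).app (τ.D.obj k)) (hx' k))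

/-- Transport `IsLimit` between a curried functor's value and the uncurried functor. -/
noncomputable def equivA (G' : A ⥤ B ⥤ Type) (a : A) (τ : SketchCone B) :
    IsLimit ((G'.obj a).mapCone τ.c) ≃
      IsLimit ((uncurry.obj G').mapCone ((withA (B := B) a).mapCone τ.c)) :=
  IsLimit.equivOfNatIsoOfIso
    (show (τ.D ⋙ G'.obj a) ≅ (τ.D ⋙ withA (B := B) a) ⋙ uncurry.obj G' from
      NatIso.ofComponents (fun _ => Iso.refl _)
      (by intro k k' f; dsimp [withA, uncurry]; simp))
    _ _ (Cones.ext (Iso.refl _) (by intro k; dsimp [withA, uncurry]; simp; exact Category.comp_id (obj := Type) _))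

noncomputable def equivB (G' : A ⥤ B ⥤ Type) (b : B) (σ : SketchCone A) :
    IsLimit (((evaluation B Type).obj b).mapCone (G'.mapCone σ.c)) ≃
      IsLimit ((uncurry.obj G').mapCone ((withB (A := A) b).mapCone σ.c)) :=
  IsLimit.equivOfNatIsoOfIso
    (show (σ.D ⋙ G') ⋙ (evaluation B Type).obj b ≅
        (σ.D ⋙ withB (A := A) b) ⋙ uncurry.obj G' from
      NatIso.ofComponents (fun _ => Iso.refl _)
      (by intro j j' f; dsimp [withB, uncurry]; simp))
    _ _ (Cones.ext (Iso.refl _) (by intro j; dsimp [withB, uncurry]; simp; exact Category.comp_id (obj := Type) _))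

/-- the category of models of the product sketch in `Type` is equivalent
to the category of models of `(A, 𝔸)` valued in the category of models of `(B, 𝔹)`. -/
theorem stmt14 (SA : Set (SketchCone A)) (SB : Set (SketchCone B)) :
    Nonempty (ObjectProperty.FullSubcategory (IsProdModel SA SB) ≌
      ObjectProperty.FullSubcategory (fun H : A ⥤ ModCat SB =>
        ∀ σ ∈ SA, Nonempty (IsLimit (H.mapCone σ.c)))) := by
  let PB : (B ⥤ Type) → Prop := fun G => ∀ τ ∈ SB, Nonempty (IsLimit (G.mapCone τ.c))
  let inc : ModCat SB ⥤ B ⥤ Type := ObjectProperty.ι PB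
  let Ψ : (A ⥤ ModCat SB) ⥤ (A ⥤ B ⥤ Type) :=
    (whiskeringRight A (ModCat SB) (B ⥤ Type)).obj inc
  have hmod : ∀ X : ObjectProperty.FullSubcategory (fun H : A ⥤ ModCat SB =>
      ∀ σ ∈ SA, Nonempty (IsLimit (H.mapCone σ.c))),
      IsProdModel SA SB ((ObjectProperty.ι _ ⋙ Ψ ⋙ uncurry).obj X) := by
    intro X
    constructor
    · intro σ hσ b
      haveI : ObjectProperty.IsClosedUnderLimitsOfShape PB σ.K :=
        ⟨fun _ ⟨p⟩ => closedUnder SB σ.K p.isLimit p.prop_diag_obj⟩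
      haveI : CreatesLimitsOfShape σ.K inc :=
        createsLimitsOfShapeFullSubcategoryInclusion (J := σ.K) (P := PB)
      haveI : PreservesLimit (σ.D ⋙ X.obj) inc :=
        preservesLimit_of_createsLimit_and_hasLimit _ _
      have hli : IsLimit (inc.mapCone (X.obj.mapCone σ.c)) :=
        isLimitOfPreserves inc (X.property σ hσ).some
      have hev : IsLimit (((evaluation B Type).obj b).mapCone
          ((Ψ.obj X.obj).mapCone σ.c)) :=
        isLimitOfPreserves ((evaluation B Type).obj b) hli
      exact ⟨equivB (Ψ.obj X.obj) b σ hev⟩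
    · intro τ hτ a
      exact ⟨equivA (Ψ.obj X.obj) a τ ((X.obj.obj a).property τ hτ).some⟩
  let Gfun : ObjectProperty.FullSubcategory (fun H : A ⥤ ModCat SB =>
        ∀ σ ∈ SA, Nonempty (IsLimit (H.mapCone σ.c))) ⥤
      ObjectProperty.FullSubcategory (IsProdModel SA SB) :=
    ObjectProperty.lift _ (ObjectProperty.ι _ ⋙ Ψ ⋙ uncurry) hmod
  haveI : (uncurry : (A ⥤ B ⥤ Type) ⥤ (A × B ⥤ Type)).IsEquivalence :=
    (currying (C := A) (D := B) (E := Type)).isEquivalence_functor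
  haveI : Ψ.Full := ((ObjectProperty.fullyFaithfulι PB).whiskeringRight A).full
  haveI : Ψ.Faithful := ((ObjectProperty.fullyFaithfulι PB).whiskeringRight A).faithful
  haveI : Gfun.EssSurj := by
    constructor
    intro X
    have hcur : ∀ a : A, PB ((curry.obj X.obj).obj a) := by
      intro a τ hτ
      exact ⟨(equivA (curry.obj X.obj) a τ).symm
        (IsLimit.mapConeEquiv ((currying.counitIso.app X.obj).symm)
          (X.property.2 τ hτ a).some)⟩
    let H : A ⥤ ModCat SB := ObjectProperty.lift PB (curry.obj X.obj) hcur
    have hH : ∀ σ ∈ SA, Nonempty (IsLimit (H.mapCone σ.c)) := by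
      intro σ hσ
      constructor
      haveI : inc.Full := (ObjectProperty.fullyFaithfulι PB).full
      haveI : inc.Faithful := (ObjectProperty.fullyFaithfulι PB).faithful
      haveI := fullyFaithful_reflectsLimits (F := inc)
      apply isLimitOfReflects inc
      apply evaluationJointlyReflectsLimits
      intro b
      exact (equivB (curry.obj X.obj) b σ).symm
        (IsLimit.mapConeEquiv ((currying.counitIso.app X.obj).symm)
          (X.property.1 σ hσ b).some)
    exact ⟨⟨H, hH⟩, ⟨(ObjectProperty.ι (IsProdModel SA SB)).preimageIso
      (currying.counitIso.app X.obj)⟩⟩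
  haveI : Gfun.IsEquivalence := {}
  exact ⟨Gfun.asEquivalence.symm⟩
end

section
/- Let A be a small category. Then a presheaf F : Aᵒᵖ ⥤ Type lies in the essential image of the Yoneda embedding composed with filtered colimits (i.e., is a filtered colimit of representables) if and only if F, viewed via its left Kan extension Lan F : (A ⥤ Type) ⥤ Type along the contravariant Yoneda embedding, preserves finite limits of corepresentable functors (i.e., preserves limits of finite diagrams K ⥤ Aᵒᵖ composed with the contravariant Yoneda embedding). -/
open CategoryTheory Limits Opposite

namespace Stmt17Aux

/-- Coequalize a finite (list-indexed) family of parallel pairs in a filtered category. -/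
lemma coeq_list {C : Type*} [Category C] [IsFiltered C] {ι : Type*} (l : List ι)
    {Y : C} {X : ι → C} (p q : ∀ i, X i ⟶ Y) :
    ∃ (Z : C) (h : Y ⟶ Z), ∀ i ∈ l, p i ≫ h = q i ≫ h := by
  induction l with
  | nil => exact ⟨Y, 𝟙 Y, by simp⟩
  | cons a l ih =>
    obtain ⟨Z, h, hh⟩ := ih
    refine ⟨IsFiltered.coeq (p a ≫ h) (q a ≫ h),
      h ≫ IsFiltered.coeqHom (p a ≫ h) (q a ≫ h), ?_⟩
    intro i hi
    rcases List.mem_cons.mp hi with rfl | hi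
    · simpa using IsFiltered.coeq_condition (p i ≫ h) (q i ≫ h)
    · simp only [← Category.assoc]
      rw [hh i hi]

variable {A : Type} [SmallCategory A] (F : Aᵒᵖ ⥤ Type)

/-- The pointwise left Kan extension of `F` along `coyoneda`. -/
noncomputable abbrev P : (A ⥤ Type) ⥤ Type := coyoneda.pointwiseLeftKanExtension F

/-- The unit of the pointwise left Kan extension. -/
noncomputable abbrev η : F ⟶ coyoneda ⋙ P F := coyoneda.pointwiseLeftKanExtensionUnit F

lemma elem_form {X : A ⥤ Type} (z : (P F).obj X) :
    ∃ (b : Aᵒᵖ) (g : coyoneda.obj b ⟶ X) (y : F.obj b),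
      z = colimit.ι (CostructuredArrow.proj coyoneda X ⋙ F) (CostructuredArrow.mk g) y := by
  obtain ⟨j, y, hy⟩ := Types.jointly_surjective' (F := CostructuredArrow.proj coyoneda X ⋙ F) z
  obtain ⟨b, ⟨⟨⟩⟩, g⟩ := j
  exact ⟨b, g, y, hy.symm⟩

lemma push {X Y : A ⥤ Type} (ψ : X ⟶ Y) {b : Aᵒᵖ} (g : coyoneda.obj b ⟶ X) (y : F.obj b) :
    (P F).map ψ (colimit.ι (CostructuredArrow.proj coyoneda X ⋙ F) (CostructuredArrow.mk g) y) =
      colimit.ι (CostructuredArrow.proj coyoneda Y ⋙ F) (CostructuredArrow.mk (g ≫ ψ)) y := by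
  have h : colimit.ι (CostructuredArrow.proj coyoneda X ⋙ F) (CostructuredArrow.mk g) ≫
      (P F).map ψ = colimit.ι (CostructuredArrow.proj coyoneda Y ⋙ F)
        ((CostructuredArrow.map ψ).obj (CostructuredArrow.mk g)) := by
    simp [Functor.pointwiseLeftKanExtension]
    exact colimit.ι_desc _ _
  exact ConcreteCategory.congr_hom h y

/-- The cocone used to define `retr`. -/
noncomputable def retrCocone (d : Aᵒᵖ) :
    Cocone (CostructuredArrow.proj coyoneda (coyoneda.obj d) ⋙ F) :=
    { pt := F.obj d
      ι :=
        { app := fun j => F.map (coyoneda.preimage j.hom)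
          naturality := fun j j' φ => by
            dsimp
            rw [Category.comp_id, ← F.map_comp]
            congr 1
            apply coyoneda.map_injective
            simp
            erw [Functor.map_comp, Functor.map_preimage, Functor.map_preimage]
            exact CostructuredArrow.w φ } }

/-- Retraction of the unit at a corepresentable. -/
noncomputable def retr (d : Aᵒᵖ) : (P F).obj (coyoneda.obj d) ⟶ F.obj d :=
  colimit.desc (CostructuredArrow.proj coyoneda (coyoneda.obj d) ⋙ F) (retrCocone F d)

lemma retr_ι (d : Aᵒᵖ) (j : CostructuredArrow coyoneda (coyoneda.obj d)) (y : F.obj j.left) :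
    retr F d (colimit.ι (CostructuredArrow.proj coyoneda (coyoneda.obj d) ⋙ F) j y) =
      F.map (coyoneda.preimage j.hom) y :=
  ConcreteCategory.congr_hom (colimit.ι_desc (retrCocone F d) j) y

lemma retr_unit (d : Aᵒᵖ) (y : F.obj d) : retr F d ((η F).app d y) = y := by
  have : (η F).app d y = colimit.ι (CostructuredArrow.proj coyoneda (coyoneda.obj d) ⋙ F)
      (CostructuredArrow.mk (𝟙 (coyoneda.obj d))) y := rfl
  rw [this, retr_ι]
  have : coyoneda.preimage (CostructuredArrow.mk (𝟙 (coyoneda.obj d))).hom = 𝟙 d := by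
    apply coyoneda.map_injective; simp
  rw [this]
  simp

lemma unit_retr (d : Aᵒᵖ) (z : (P F).obj (coyoneda.obj d)) :
    (η F).app d (retr F d z) = z := by
  obtain ⟨b, g, y, rfl⟩ := elem_form F z
  rw [retr_ι]
  exact ConcreteCategory.congr_hom (colimit.w (CostructuredArrow.proj coyoneda (coyoneda.obj d) ⋙ F)
    (CostructuredArrow.homMk (coyoneda.preimage (CostructuredArrow.mk g).hom)
      (by simp) : CostructuredArrow.mk g ⟶ CostructuredArrow.mk (𝟙 (coyoneda.obj d)))) y


section
variable {K : Type} [SmallCategory K] (D : K ⥤ Aᵒᵖ)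

/-- The canonical functor `Kᵒᵖ ⥤ CostructuredArrow yoneda F` associated to a compatible
family of elements. -/
@[simps!]
def toE (x : ∀ k : K, F.obj (D.obj k))
    (hx : ∀ {k k' : K} (f : k ⟶ k'), F.map (D.map f) (x k) = x k') :
    Kᵒᵖ ⥤ CostructuredArrow yoneda F where
  obj k := CostructuredArrow.mk (yonedaEquiv.symm (x k.unop))
  map {k k'} f := CostructuredArrow.homMk (D.map f.unop).unop (by
    show yoneda.map (D.map f.unop).unop ≫ yonedaEquiv.symm (x k'.unop) =
      yonedaEquiv.symm (x k.unop)
    apply yonedaEquiv.injective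
    rw [← yonedaEquiv_naturality]
    simp only [CostructuredArrow.mk_hom_eq_self, Equiv.apply_symm_apply, Quiver.Hom.op_unop]
    exact hx f.unop)
  map_id k := by
    apply CostructuredArrow.hom_ext
    simp
  map_comp f g := by
    apply CostructuredArrow.hom_ext
    simp

variable (c : Cone (D ⋙ coyoneda))

lemma key (b : Aᵒᵖ) (g : coyoneda.obj b ⟶ c.pt) (y : F.obj b) (k : K) :
    retr F (D.obj k) ((P F).map (c.π.app k)
      (colimit.ι (CostructuredArrow.proj coyoneda c.pt ⋙ F) (CostructuredArrow.mk g) y)) =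
    F.map (coyoneda.preimage (g ≫ c.π.app k)) y := by
  rw [push F (X := c.pt) (c.π.app k) g y]
  exact retr_ι F (D.obj k) (CostructuredArrow.mk (g ≫ c.π.app k)) y

lemma eq_of_proj [IsFiltered (CostructuredArrow yoneda F)] [Fintype K]
    (hc : IsLimit c) (z₁ z₂ : (P F).obj c.pt)
    (h : ∀ k, (P F).map (c.π.app k) z₁ = (P F).map (c.π.app k) z₂) : z₁ = z₂ := by
  obtain ⟨b₁, g₁, y₁, rfl⟩ := elem_form F z₁
  obtain ⟨b₂, g₂, y₂, rfl⟩ := elem_form F z₂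
  have hx₂ : ∀ k, F.map (coyoneda.preimage (g₂ ≫ c.π.app k)) y₂ =
      F.map (coyoneda.preimage (g₁ ≫ c.π.app k)) y₁ := fun k =>
    ((key F D c b₂ g₂ y₂ k).symm.trans
      ((congr_arg (retr F (D.obj k)) (h k)).symm.trans (key F D c b₁ g₁ y₁ k)))
  let eV₁ : CostructuredArrow yoneda F := CostructuredArrow.mk (yonedaEquiv.symm y₁)
  let eV₂ : CostructuredArrow yoneda F := CostructuredArrow.mk (yonedaEquiv.symm y₂)
  let ek : K → CostructuredArrow yoneda F := fun k =>
    CostructuredArrow.mk (yonedaEquiv.symm (F.map (coyoneda.preimage (g₁ ≫ c.π.app k)) y₁))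
  let ν₁ : ∀ k, ek k ⟶ eV₁ := fun k =>
    CostructuredArrow.homMk (coyoneda.preimage (g₁ ≫ c.π.app k)).unop (by
      show yoneda.map (coyoneda.preimage (g₁ ≫ c.π.app k)).unop ≫ yonedaEquiv.symm y₁ =
        yonedaEquiv.symm (F.map (coyoneda.preimage (g₁ ≫ c.π.app k)) y₁)
      apply yonedaEquiv.injective
      rw [← yonedaEquiv_naturality]
      simp only [Equiv.apply_symm_apply, Quiver.Hom.op_unop])
  let ν₂ : ∀ k, ek k ⟶ eV₂ := fun k =>
    CostructuredArrow.homMk (coyoneda.preimage (g₂ ≫ c.π.app k)).unop (by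
      show yoneda.map (coyoneda.preimage (g₂ ≫ c.π.app k)).unop ≫ yonedaEquiv.symm y₂ =
        yonedaEquiv.symm (F.map (coyoneda.preimage (g₁ ≫ c.π.app k)) y₁)
      apply yonedaEquiv.injective
      rw [← yonedaEquiv_naturality]
      simp only [Equiv.apply_symm_apply, Quiver.Hom.op_unop]
      exact hx₂ k)
  obtain ⟨Z, hmor, hZ⟩ := coeq_list (Finset.univ.toList (α := K))
      (fun k => ν₁ k ≫ IsFiltered.leftToMax eV₁ eV₂)
      (fun k => ν₂ k ≫ IsFiltered.rightToMax eV₁ eV₂)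
  let r₁ : eV₁ ⟶ Z := IsFiltered.leftToMax eV₁ eV₂ ≫ hmor
  let r₂ : eV₂ ⟶ Z := IsFiltered.rightToMax eV₁ eV₂ ≫ hmor
  have hZ' : ∀ k : K, ν₁ k ≫ r₁ = ν₂ k ≫ r₂ := by
    intro k
    have h6 := hZ k (by simp [Finset.mem_toList])
    simpa [Category.assoc, r₁, r₂] using h6
  let yhat : F.obj (op Z.left) := yonedaEquiv Z.hom
  have hry₁ : F.map (r₁.left.op) yhat = y₁ := by
    refine (yonedaEquiv_naturality _ _).trans ?_
    rw [CostructuredArrow.w r₁]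
    exact Equiv.apply_symm_apply _ _
  have hry₂ : F.map (r₂.left.op) yhat = y₂ := by
    refine (yonedaEquiv_naturality _ _).trans ?_
    rw [CostructuredArrow.w r₂]
    exact Equiv.apply_symm_apply _ _
  have hg : coyoneda.map (r₁.left.op) ≫ g₁ = coyoneda.map (r₂.left.op) ≫ g₂ := by
    apply hc.hom_ext; intro k
    rw [Category.assoc, Category.assoc,
      ← coyoneda.map_preimage (g₁ ≫ c.π.app k), ← coyoneda.map_preimage (g₂ ≫ c.π.app k),
      ← coyoneda.map_comp, ← coyoneda.map_comp]
    congr 1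
    apply Quiver.Hom.unop_inj
    have h5 := congr_arg CommaMorphism.left (hZ' k)
    simpa [ν₁, ν₂] using h5
  have w₁ : colimit.ι (CostructuredArrow.proj coyoneda c.pt ⋙ F)
      (CostructuredArrow.mk (coyoneda.map (r₁.left.op) ≫ g₁)) yhat =
      colimit.ι (CostructuredArrow.proj coyoneda c.pt ⋙ F) (CostructuredArrow.mk g₁) y₁ := by
    have h0 : colimit.ι (CostructuredArrow.proj coyoneda c.pt ⋙ F)
        (CostructuredArrow.mk (coyoneda.map (r₁.left.op) ≫ g₁)) yhat =
        colimit.ι (CostructuredArrow.proj coyoneda c.pt ⋙ F) (CostructuredArrow.mk g₁)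
          (F.map (r₁.left.op) yhat) :=
      (ConcreteCategory.congr_hom (colimit.w (CostructuredArrow.proj coyoneda c.pt ⋙ F)
        (CostructuredArrow.homMk (r₁.left.op) rfl :
          CostructuredArrow.mk (coyoneda.map (r₁.left.op) ≫ g₁) ⟶ CostructuredArrow.mk g₁))
        yhat).symm
    rw [hry₁] at h0
    exact h0
  have w₂ : colimit.ι (CostructuredArrow.proj coyoneda c.pt ⋙ F)
      (CostructuredArrow.mk (coyoneda.map (r₁.left.op) ≫ g₁)) yhat =
      colimit.ι (CostructuredArrow.proj coyoneda c.pt ⋙ F) (CostructuredArrow.mk g₂) y₂ := by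
    have h0 : colimit.ι (CostructuredArrow.proj coyoneda c.pt ⋙ F)
        (CostructuredArrow.mk (coyoneda.map (r₁.left.op) ≫ g₁)) yhat =
        colimit.ι (CostructuredArrow.proj coyoneda c.pt ⋙ F) (CostructuredArrow.mk g₂)
          (F.map (r₂.left.op) yhat) :=
      (ConcreteCategory.congr_hom (colimit.w (CostructuredArrow.proj coyoneda c.pt ⋙ F)
        (CostructuredArrow.homMk (r₂.left.op) hg.symm :
          CostructuredArrow.mk (coyoneda.map (r₁.left.op) ≫ g₁) ⟶ CostructuredArrow.mk g₂))
        yhat).symm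
    rw [hry₂] at h0
    exact h0
  exact w₁.symm.trans w₂

lemma isLimit_mapCone_of_isFiltered [IsFiltered (CostructuredArrow yoneda F)]
    [FinCategory K] (hc : IsLimit c) : Nonempty (IsLimit ((P F).mapCone c)) := by
  rw [Types.isLimit_iff]
  intro s hs
  have hsx : ∀ k, (η F).app (D.obj k) (retr F (D.obj k) (s k)) = s k := fun k => unit_retr F _ _
  have hx : ∀ {k k' : K} (f : k ⟶ k'),
      F.map (D.map f) (retr F (D.obj k) (s k)) = retr F (D.obj k') (s k') := by
    intro k k' f
    have h1 : ((D ⋙ coyoneda) ⋙ (P F)).map f ((η F).app (D.obj k) (retr F (D.obj k) (s k)))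
        = s k' := by rw [hsx k]; exact hs f
    have h3 : (η F).app (D.obj k') (F.map (D.map f) (retr F (D.obj k) (s k))) = s k' :=
      (ConcreteCategory.congr_hom ((η F).naturality (D.map f)) (retr F (D.obj k) (s k))).trans h1
    have h4 := congr_arg (retr F (D.obj k')) h3
    rwa [retr_unit] at h4
  obtain ⟨S⟩ := IsFiltered.cocone_nonempty (toE F D (fun k => retr F (D.obj k) (s k)) hx)
  let w : ∀ k : K, op S.pt.left ⟶ D.obj k := fun k => (S.ι.app (op k)).left.op
  have hw : ∀ {k k' : K} (f : k ⟶ k'), w k ≫ D.map f = w k' := by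
    intro k k' f
    have h : (D.map f).unop ≫ (S.ι.app (op k)).left = (S.ι.app (op k')).left := by
      have h0 := congr_arg CommaMorphism.left (S.ι.naturality f.op)
      simpa [toE] using h0
    show (S.ι.app (op k)).left.op ≫ D.map f = (S.ι.app (op k')).left.op
    rw [← h]
    rfl
  let cone' : Cone (D ⋙ coyoneda) :=
    { pt := coyoneda.obj (op S.pt.left)
      π := { app := fun k => coyoneda.map (w k)
             naturality := fun k k' f => by
               dsimp
               rw [Category.id_comp, ← coyoneda.map_comp, hw f] } }
  let g : coyoneda.obj (op S.pt.left) ⟶ c.pt := hc.lift cone'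
  have hg : ∀ k, g ≫ c.π.app k = coyoneda.map (w k) := fun k => hc.fac cone' k
  let yhat : F.obj (op S.pt.left) := yonedaEquiv S.pt.hom
  refine ⟨colimit.ι (CostructuredArrow.proj coyoneda c.pt ⋙ F) (CostructuredArrow.mk g) yhat,
    fun k => ?_, fun z hz => ?_⟩
  · have hFyhat : F.map (w k) yhat = retr F (D.obj k) (s k) := by
      have hwS : yoneda.map (S.ι.app (op k)).left ≫ S.pt.hom =
          (CostructuredArrow.mk (yonedaEquiv.symm (retr F (D.obj k) (s k)))).hom :=
        CostructuredArrow.w (S.ι.app (op k))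
      refine (yonedaEquiv_naturality _ _).trans ?_
      rw [hwS]
      exact Equiv.apply_symm_apply _ _
    exact (push F (X := c.pt) (c.π.app k) g yhat).trans
      ((ConcreteCategory.congr_hom (colimit.w (CostructuredArrow.proj coyoneda (coyoneda.obj (D.obj k)) ⋙ F)
        (CostructuredArrow.homMk (w k) (by simp [hg k]) :
          CostructuredArrow.mk (g ≫ c.π.app k) ⟶
            CostructuredArrow.mk (𝟙 (coyoneda.obj (D.obj k))))) yhat).symm.trans
        (by exact (congrArg (ConcreteCategory.hom (colimit.ι (CostructuredArrow.proj coyoneda (coyoneda.obj (D.obj k)) ⋙ F) (CostructuredArrow.mk (𝟙 (coyoneda.obj (D.obj k)))))) hFyhat).trans (hsx k)))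
  · refine eq_of_proj F D c hc _ _ (fun k => ?_)
    have h1 : (P F).map (c.π.app k) z = s k := hz k
    have h2 : (P F).map (c.π.app k)
        (colimit.ι (CostructuredArrow.proj coyoneda c.pt ⋙ F) (CostructuredArrow.mk g) yhat)
        = s k := by
      have hFyhat : F.map (w k) yhat = retr F (D.obj k) (s k) := by
        have hwS : yoneda.map (S.ι.app (op k)).left ≫ S.pt.hom =
            (CostructuredArrow.mk (yonedaEquiv.symm (retr F (D.obj k) (s k)))).hom :=
          CostructuredArrow.w (S.ι.app (op k))
        refine (yonedaEquiv_naturality _ _).trans ?_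
        rw [hwS]
        exact Equiv.apply_symm_apply _ _
      exact (push F (X := c.pt) (c.π.app k) g yhat).trans
        ((ConcreteCategory.congr_hom (colimit.w (CostructuredArrow.proj coyoneda (coyoneda.obj (D.obj k)) ⋙ F)
          (CostructuredArrow.homMk (w k) (by simp [hg k]) :
            CostructuredArrow.mk (g ≫ c.π.app k) ⟶
              CostructuredArrow.mk (𝟙 (coyoneda.obj (D.obj k))))) yhat).symm.trans
          (by exact (congrArg (ConcreteCategory.hom (colimit.ι (CostructuredArrow.proj coyoneda (coyoneda.obj (D.obj k)) ⋙ F) (CostructuredArrow.mk (𝟙 (coyoneda.obj (D.obj k)))))) hFyhat).trans (hsx k)))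
    rw [h1, h2]

end

/-- If the pointwise left Kan extension preserves finite corepresentable limits,
then the category of elements is filtered. -/
lemma isFiltered_of_rhs
    (hR : ∀ (K : Type) [SmallCategory K] [FinCategory K] (D : K ⥤ Aᵒᵖ)
      (c : Cone (D ⋙ coyoneda)), IsLimit c → Nonempty (IsLimit ((P F).mapCone c))) :
    IsFiltered (CostructuredArrow yoneda F) := by
  apply IsFiltered.of_cocone_nonempty.{0}
  intro J _ _ B
  let D : Jᵒᵖ ⥤ Aᵒᵖ := (B ⋙ CostructuredArrow.proj yoneda F).op
  let c : Cone (D ⋙ coyoneda) := limit.cone (D ⋙ coyoneda)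
  obtain ⟨hP⟩ := hR Jᵒᵖ D c (limit.isLimit _)
  let x : ∀ k : Jᵒᵖ, F.obj (D.obj k) := fun k => yonedaEquiv (B.obj k.unop).hom
  let s : ∀ k : Jᵒᵖ, ((D ⋙ coyoneda) ⋙ P F).obj k := fun k => (η F).app (D.obj k) (x k)
  have hsec : s ∈ ((D ⋙ coyoneda) ⋙ P F).sections := by
    intro k k' f
    have hBf : F.map (D.map f) (x k) = x k' := by
      have hBw : yoneda.map (B.map f.unop).left ≫ (B.obj k.unop).hom = (B.obj k'.unop).hom :=
        CostructuredArrow.w (B.map f.unop)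
      have h1 : F.map ((B.map f.unop).left.op) (x k) =
          yonedaEquiv (yoneda.map (B.map f.unop).left ≫ (B.obj k.unop).hom) :=
        yonedaEquiv_naturality _ _
      rw [hBw] at h1
      exact h1
    have hnat := ConcreteCategory.congr_hom ((η F).naturality (D.map f)) (x k)
    exact hnat.symm.trans (congr_arg ((η F).app (D.obj k')) hBf)
  obtain ⟨xh, hxh, -⟩ := (Types.isLimit_iff ((P F).mapCone c)).mp ⟨hP⟩ s hsec
  obtain ⟨b, g, y, rfl⟩ := elem_form F xh
  have hkey : ∀ k : Jᵒᵖ, F.map (coyoneda.preimage (g ≫ c.π.app k)) y = x k := by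
    intro k
    have h1 : retr F (D.obj k) ((P F).map (c.π.app k)
        (colimit.ι (CostructuredArrow.proj coyoneda c.pt ⋙ F) (CostructuredArrow.mk g) y)) =
        retr F (D.obj k) (s k) := congr_arg (retr F (D.obj k)) (hxh k)
    exact (key F D c b g y k).symm.trans (h1.trans (retr_unit F (D.obj k) (x k)))
  refine ⟨⟨CostructuredArrow.mk (yonedaEquiv.symm y),
    { app := fun j => CostructuredArrow.homMk (coyoneda.preimage (g ≫ c.π.app (op j))).unop (by
        show yoneda.map (coyoneda.preimage (g ≫ c.π.app (op j))).unop ≫ yonedaEquiv.symm y =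
          (B.obj j).hom
        rw [yonedaEquiv_symm_naturality_left, Quiver.Hom.op_unop, hkey (op j)]
        exact Equiv.symm_apply_apply _ _)
      naturality := fun j j' f => by
        have hcomp : coyoneda.preimage (g ≫ c.π.app (op j')) ≫ D.map f.op
            = coyoneda.preimage (g ≫ c.π.app (op j)) := by
          apply coyoneda.map_injective
          rw [coyoneda.map_comp, coyoneda.map_preimage, coyoneda.map_preimage, Category.assoc]
          exact congr_arg (fun t => g ≫ t) (c.w f.op)
        apply CostructuredArrow.hom_ext
        simp only [Comma.comp_left, CostructuredArrow.homMk_left, Functor.const_obj_obj,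
          Functor.const_obj_map, Category.comp_id]
        exact congr_arg Quiver.Hom.unop hcomp }⟩⟩

end Stmt17Aux

open Stmt17Aux in
/-- A presheaf `F : Aᵒᵖ ⥤ Type` is a filtered colimit of representables
if and only if its left Kan extension `G` along the contravariant Yoneda embedding
`coyoneda : Aᵒᵖ ⥤ (A ⥤ Type)` preserves finite limits of corepresentable functors,
i.e. limits of finite diagrams `K ⥤ Aᵒᵖ` composed with `coyoneda`. -/
theorem stmt17 {A : Type} [SmallCategory A] (F : Aᵒᵖ ⥤ Type)
    (G : (A ⥤ Type) ⥤ Type) (α : F ⟶ coyoneda ⋙ G) [G.IsLeftKanExtension α] :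
    (∃ I : Cat.{0, 0}, IsFiltered I ∧ ∃ (D : I ⥤ A) (t : Cocone (D ⋙ yoneda)),
        Nonempty (IsColimit t) ∧ Nonempty (t.pt ≅ F)) ↔
      (∀ (K : Cat.{0, 0}) [FinCategory K] (D : K ⥤ Aᵒᵖ) (c : Cone (D ⋙ coyoneda)),
        IsLimit c → Nonempty (IsLimit (G.mapCone c))) := by
  have e : P F ≅ G := Functor.leftKanExtensionUnique (P F) (η F) G α
  constructor
  · rintro ⟨I, hI, D0, t, ⟨ht⟩, ⟨iso⟩⟩
    intro K instK D c hc
    haveI := hI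
    have hInd : IsIndObject F := by
      have h1 : IsIndObject t.pt := IsIndObject.mk (IndObjectPresentation.ofCocone t ht)
      exact h1.map iso.hom
    haveI hFil : IsFiltered (CostructuredArrow yoneda F) := hInd.isFiltered
    obtain ⟨hP⟩ := isLimit_mapCone_of_isFiltered F D c hc
    exact ⟨IsLimit.mapConeEquiv e hP⟩
  · intro hR
    haveI hFil : IsFiltered (CostructuredArrow yoneda F) := by
      apply isFiltered_of_rhs F
      intro K _ _ D c hc
      obtain ⟨hG⟩ := @hR (Cat.of K) ‹FinCategory K› D c hc
      exact ⟨IsLimit.mapConeEquiv e.symm hG⟩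
    haveI : EssentiallySmall.{0} (CostructuredArrow yoneda F) := essentiallySmallSelf.{0,0,0} _
    haveI hSmall : FinallySmall.{0} (CostructuredArrow yoneda F) :=
      finallySmall_of_essentiallySmall _
    have hInd : IsIndObject F := isIndObject_of_isFiltered_of_finallySmall F
    obtain ⟨P0⟩ := hInd.nonempty_presentation
    exact ⟨Cat.of P0.I, P0.hI, P0.F, P0.cocone, ⟨P0.coconeIsColimit⟩, ⟨Iso.refl _⟩⟩
end
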